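/- Let G be a real solvable Lie algebra of dimension n ≥ 4 whose derived ideal G¹ = [G,G] is abelian of dimension n − 2. Then the dimension of A_G is 1 or 2. -/

import Mathlib

open Module

/-- The restriction to a Lie ideal `I` of the adjoint operator `ad X`,
as a linear endomorphism of `I`. -/
noncomputable def adRestrict {G : Type*} [LieRing G] [LieAlgebra ℝ G]
    (I : LieIdeal ℝ G) (X : G) : Module.End ℝ (I : Submodule ℝ G) :=
  (LieAlgebra.ad ℝ G X).restrict fun v hv => I.lie_mem hv

/-- The span `A_G` of the restricted adjoint operators inside `End(G¹)`. -/
noncomputable def adSpan (G : Type*) [LieRing G] [LieAlgebra ℝ G] :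
    Submodule ℝ (Module.End ℝ ((LieAlgebra.derivedSeries ℝ G 1 : LieIdeal ℝ G) : Submodule ℝ G)) :=
  Submodule.span ℝ (Set.range fun X : G => adRestrict (LieAlgebra.derivedSeries ℝ G 1) X)

theorem adRestrict_apply {G : Type*} [LieRing G] [LieAlgebra ℝ G]
    (I : LieIdeal ℝ G) (X : G) (v : (I : Submodule ℝ G)) :
    ((adRestrict I X v : (I : Submodule ℝ G)) : G) = ⁅X, (v : G)⁆ := rfl

/-- The map `X ↦ adRestrict I X` as a linear map. -/
noncomputable def adRestrictₗ {G : Type*} [LieRing G] [LieAlgebra ℝ G]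
    (I : LieIdeal ℝ G) : G →ₗ[ℝ] Module.End ℝ (I : Submodule ℝ G) where
  toFun := adRestrict I
  map_add' X Y := by
    ext v
    show ⁅X + Y, (v : G)⁆ = ⁅X, (v : G)⁆ + ⁅Y, (v : G)⁆
    exact add_lie _ _ _
  map_smul' c X := by
    ext v
    show ⁅c • X, (v : G)⁆ = c • ⁅X, (v : G)⁆
    exact smul_lie _ _ _

/-- if `G` is a real solvable Lie algebra of dimension `n ≥ 4` whose derived
ideal is abelian of dimension `n - 2`, then `dim A_G ∈ {1, 2}`. -/
theorem finrank_adSpan_of_codim_two_abelian_derived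
    (G : Type*) [LieRing G] [LieAlgebra ℝ G] [FiniteDimensional ℝ G]
    [LieAlgebra.IsSolvable G] (n : ℕ) (hn : Module.finrank ℝ G = n) (hn4 : 4 ≤ n)
    (habelian : ∀ u v : G, u ∈ LieAlgebra.derivedSeries ℝ G 1 →
      v ∈ LieAlgebra.derivedSeries ℝ G 1 → ⁅u, v⁆ = 0)
    (hdim : Module.finrank ℝ (LieAlgebra.derivedSeries ℝ G 1) = n - 2) :
    Module.finrank ℝ (adSpan G) = 1 ∨ Module.finrank ℝ (adSpan G) = 2 := by
  have hdim' : finrank ℝ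
      ((LieAlgebra.derivedSeries ℝ G 1 : LieIdeal ℝ G) : Submodule ℝ G) = n - 2 := hdim
  have hrange : adSpan G = LinearMap.range (adRestrictₗ (LieAlgebra.derivedSeries ℝ G 1)) := by
    rw [adSpan]
    have h : (Set.range fun X : G => adRestrict (LieAlgebra.derivedSeries ℝ G 1) X)
        = ↑(LinearMap.range (adRestrictₗ (LieAlgebra.derivedSeries ℝ G 1))) := by
      rw [LinearMap.coe_range]; rfl
    rw [h, Submodule.span_eq]
  -- upper bound
  have hkerI : ((LieAlgebra.derivedSeries ℝ G 1 : LieIdeal ℝ G) : Submodule ℝ G)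
      ≤ LinearMap.ker (adRestrictₗ (LieAlgebra.derivedSeries ℝ G 1)) := by
    intro v hv
    rw [LinearMap.mem_ker]
    ext w
    have h0 : ⁅v, (w : G)⁆ = 0 := habelian v w hv w.2
    simp only [adRestrictₗ, LinearMap.coe_mk, AddHom.coe_mk, LinearMap.zero_apply,
      ZeroMemClass.coe_zero]
    rw [adRestrict_apply]
    simpa using h0
  have hrn := LinearMap.finrank_range_add_finrank_ker
    (adRestrictₗ (LieAlgebra.derivedSeries ℝ G 1))
  have hkerge : n - 2 ≤ finrank ℝ
      (LinearMap.ker (adRestrictₗ (LieAlgebra.derivedSeries ℝ G 1))) := by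
    rw [← hdim']
    exact Submodule.finrank_mono hkerI
  have hle2 : finrank ℝ (adSpan G) ≤ 2 := by
    rw [hrange]; omega
  -- lower bound
  have hne0 : finrank ℝ (adSpan G) ≠ 0 := by
    intro h0
    have hbot : adSpan G = ⊥ := Submodule.finrank_eq_zero.mp h0
    have hz : ∀ (X v : G), v ∈ LieAlgebra.derivedSeries ℝ G 1 → ⁅X, v⁆ = 0 := by
      intro X v hv
      have hmem : adRestrict (LieAlgebra.derivedSeries ℝ G 1) X ∈ adSpan G :=
        Submodule.subset_span ⟨X, rfl⟩
      rw [hbot, Submodule.mem_bot] at hmem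
      have h1 := congrArg (fun f : Module.End ℝ
        ((LieAlgebra.derivedSeries ℝ G 1 : LieIdeal ℝ G) : Submodule ℝ G) =>
        ((f ⟨v, hv⟩ : _) : G)) hmem
      have h2 : ⁅X, v⁆ = 0 := h1
      exact h2
    -- quotient has dimension 2
    have hQ : finrank ℝ
        (G ⧸ ((LieAlgebra.derivedSeries ℝ G 1 : LieIdeal ℝ G) : Submodule ℝ G)) = 2 := by
      have hq := Submodule.finrank_quotient_add_finrank
        ((LieAlgebra.derivedSeries ℝ G 1 : LieIdeal ℝ G) : Submodule ℝ G)
      omega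
    let b := finBasisOfFinrankEq ℝ
      (G ⧸ ((LieAlgebra.derivedSeries ℝ G 1 : LieIdeal ℝ G) : Submodule ℝ G)) hQ
    obtain ⟨x, hx⟩ := Submodule.mkQ_surjective
      ((LieAlgebra.derivedSeries ℝ G 1 : LieIdeal ℝ G) : Submodule ℝ G) (b 0)
    obtain ⟨y, hy⟩ := Submodule.mkQ_surjective
      ((LieAlgebra.derivedSeries ℝ G 1 : LieIdeal ℝ G) : Submodule ℝ G) (b 1)
    have hdec : ∀ z : G, ∃ (a : G) (s t : ℝ), a ∈ LieAlgebra.derivedSeries ℝ G 1 ∧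
        z = a + (s • x + t • y) := by
      intro z
      obtain ⟨r0, r1, hr⟩ : ∃ r0 r1 : ℝ, r0 • b 0 + r1 • b 1 =
          (((LieAlgebra.derivedSeries ℝ G 1 : LieIdeal ℝ G) : Submodule ℝ G)).mkQ z := by
        refine ⟨b.repr ((((LieAlgebra.derivedSeries ℝ G 1 : LieIdeal ℝ G) :
            Submodule ℝ G)).mkQ z) 0, b.repr ((((LieAlgebra.derivedSeries ℝ G 1 : LieIdeal ℝ G) :
            Submodule ℝ G)).mkQ z) 1, ?_⟩
        have hs := b.sum_repr
          ((((LieAlgebra.derivedSeries ℝ G 1 : LieIdeal ℝ G) : Submodule ℝ G)).mkQ z)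
        rwa [Fin.sum_univ_two] at hs
      have hmem : z - (r0 • x + r1 • y) ∈
          (((LieAlgebra.derivedSeries ℝ G 1 : LieIdeal ℝ G) : Submodule ℝ G)) := by
        rw [← Submodule.ker_mkQ (((LieAlgebra.derivedSeries ℝ G 1 : LieIdeal ℝ G) :
          Submodule ℝ G)), LinearMap.mem_ker, map_sub, map_add, map_smul, map_smul,
          hx, hy, hr, sub_self]
      exact ⟨z - (r0 • x + r1 • y), r0, r1, hmem, by abel⟩
    -- every bracket lies in span {⁅x,y⁆}
    have hbr : ∀ u v : G, ⁅u, v⁆ ∈ Submodule.span ℝ {⁅x, y⁆} := by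
      intro u v
      obtain ⟨a, s, t, haI, rfl⟩ := hdec u
      obtain ⟨b', s', t', hbI, rfl⟩ := hdec v
      have ha' : ∀ w : G, ⁅a, w⁆ = 0 := fun w => by
        rw [← lie_skew, hz w a haI, neg_zero]
      have hb' : ∀ w : G, ⁅w, b'⁆ = 0 := fun w => hz w b' hbI
      have heq : ⁅a + (s • x + t • y), b' + (s' • x + t' • y)⁆
          = (s * t' - t * s') • ⁅x, y⁆ := by
        have hyx : ⁅y, x⁆ = -⁅x, y⁆ := by rw [← lie_skew]
        simp only [add_lie, lie_add, smul_lie, lie_smul, ha', hb', lie_self, hyx,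
          smul_zero, zero_add, add_zero, smul_neg, smul_smul, sub_smul]
        module
      rw [heq]
      exact Submodule.smul_mem _ _ (Submodule.mem_span_singleton_self _)
    have hIle : ((LieAlgebra.derivedSeries ℝ G 1 : LieIdeal ℝ G) : Submodule ℝ G)
        ≤ Submodule.span ℝ {⁅x, y⁆} := by
      have hItop : (LieAlgebra.derivedSeries ℝ G 1 : LieIdeal ℝ G)
          = ⁅(⊤ : LieIdeal ℝ G), (⊤ : LieIdeal ℝ G)⁆ := rfl
      rw [LieIdeal.toLieSubalgebra_toSubmodule, hItop,
        LieSubmodule.lieIdeal_oper_eq_linear_span']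
      rw [Submodule.span_le]
      rintro _ ⟨u, -, v, -, rfl⟩
      exact hbr u v
    have hle1 : finrank ℝ
        ((LieAlgebra.derivedSeries ℝ G 1 : LieIdeal ℝ G) : Submodule ℝ G) ≤ 1 := by
      rcases eq_or_ne (⁅x, y⁆ : G) 0 with h | h
      · calc finrank ℝ ((LieAlgebra.derivedSeries ℝ G 1 : LieIdeal ℝ G) : Submodule ℝ G)
            ≤ finrank ℝ (Submodule.span ℝ {⁅x, y⁆}) := Submodule.finrank_mono hIle
          _ ≤ 1 := by
              rw [h, Submodule.span_singleton_eq_bot.mpr rfl, finrank_bot]; omega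
      · calc finrank ℝ ((LieAlgebra.derivedSeries ℝ G 1 : LieIdeal ℝ G) : Submodule ℝ G)
            ≤ finrank ℝ (Submodule.span ℝ {⁅x, y⁆}) := Submodule.finrank_mono hIle
          _ = 1 := finrank_span_singleton h
    omega
  omega
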